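/- For positive integers d, a, n with a < (d+3)/2 and n ≥ a, the number of partitions with perimeter n into parts ≡ ±a (mod d+3) equals the sum over k from 0 to ⌊(n-a)/(d+3)⌋ of C(n - a - kd - k, n - a - kd - 3k), plus the sum over k from 1 to ⌊(n+a)/(d+3)⌋ of C(n + a - kd - k - 1, n + a - kd - 3k). -/

import Mathlib

/-- A partition: a nonempty, nonincreasing list of positive integers. -/
def IsPartition (l : List ℕ) : Prop :=
  l ≠ [] ∧ l.Pairwise (· ≥ ·) ∧ ∀ x ∈ l, 0 < x

/-- Perimeter: (largest part) + (number of parts) - 1. -/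
def perimeter (l : List ℕ) : ℕ := l.headI + l.length - 1

/-- d-distinct: consecutive parts differ by at least d. -/
def DDistinct (d : ℕ) (l : List ℕ) : Prop := l.Chain' (fun x y => y + d ≤ x)

lemma attach_map_aux (F : Finset ℕ) (t : List ℕ) (h : ∀ x ∈ t, x ∈ F) :
    ((t.attach.map (fun x => (⟨x.1, h x.1 x.2⟩ : {x // x ∈ F}))).map Subtype.val) = t := by
  simp

def sortedListEquivSym (F : Finset ℕ) (r : ℕ) :
    {t : List ℕ // t.Pairwise (· ≥ ·) ∧ t.length = r ∧ ∀ x ∈ t, x ∈ F} ≃ Sym {x // x ∈ F} r where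
  toFun t := ⟨((t.1.attach.map (fun x => (⟨x.1, t.2.2.2 x.1 x.2⟩ : {x // x ∈ F}))) : List {x // x ∈ F}),
    by simp [t.2.2.1]⟩
  invFun s := ⟨(s.1.map Subtype.val).sort (· ≥ ·), Multiset.pairwise_sort _ _, by
      simp [s.2], by
      intro x hx
      have : x ∈ (s.1.map Subtype.val).sort (· ≥ ·) := hx
      rw [Multiset.mem_sort] at this
      obtain ⟨y, _, rfl⟩ := Multiset.mem_map.mp this
      exact y.2⟩
  left_inv t := by
    apply Subtype.ext
    dsimp only
    refine List.Perm.eq_of_pairwise' (Multiset.pairwise_sort _ _) t.2.1 ?_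
    rw [← Multiset.coe_eq_coe, Multiset.sort_eq, Multiset.map_coe, attach_map_aux]
  right_inv s := by
    apply Subtype.ext
    dsimp only
    apply Multiset.map_injective (Subtype.val_injective (p := (· ∈ F)))
    rw [Multiset.map_coe, attach_map_aux, Multiset.sort_eq]

lemma card_sorted_lists (F : Finset ℕ) (r : ℕ) :
    Nat.card {t : List ℕ // t.Pairwise (· ≥ ·) ∧ t.length = r ∧ ∀ x ∈ t, x ∈ F}
      = (F.card + r - 1).choose r := by
  rw [Nat.card_congr (sortedListEquivSym F r), Nat.card_eq_fintype_card,
    Sym.card_sym_eq_choose, Fintype.card_coe]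

def Sfin (D A M : ℕ) : Finset ℕ :=
  (Finset.Icc 1 M).filter (fun x => x % D = A % D ∨ (x + A) % D = 0)

def mainEquiv (D A n : ℕ) :
    {l : List ℕ // IsPartition l ∧ perimeter l = n ∧
        (∀ x ∈ l, x % D = A % D ∨ (x + A) % D = 0)} ≃
    Σ M : {M // M ∈ Sfin D A n},
      {t : List ℕ // t.Pairwise (· ≥ ·) ∧ t.length = n - M.1 ∧ ∀ x ∈ t, x ∈ Sfin D A M.1} where
  toFun x := by
    refine ⟨⟨x.1.headI, ?_⟩, ⟨x.1.tail, ?_, ?_, ?_⟩⟩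
    · obtain ⟨l, ⟨hne, hsort, hpos⟩, hper, hcond⟩ := x
      rcases l with _ | ⟨M, t⟩
      · exact absurd rfl hne
      · simp only [List.headI_cons]
        have hM1 : 0 < M := hpos M (by simp)
        have hMn : M ≤ n := by
          simp only [perimeter, List.headI_cons, List.length_cons] at hper
          omega
        exact Finset.mem_filter.mpr ⟨Finset.mem_Icc.mpr ⟨hM1, hMn⟩, hcond M (by simp)⟩
    · exact x.2.1.2.1.tail
    · obtain ⟨l, ⟨hne, hsort, hpos⟩, hper, hcond⟩ := x
      rcases l with _ | ⟨M, t⟩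
      · exact absurd rfl hne
      · simp only [perimeter, List.headI_cons, List.length_cons] at hper
        simp only [List.tail_cons, List.headI_cons]
        omega
    · obtain ⟨l, ⟨hne, hsort, hpos⟩, hper, hcond⟩ := x
      rcases l with _ | ⟨M, t⟩
      · exact absurd rfl hne
      · simp only [List.tail_cons, List.headI_cons]
        intro y hy
        have hle : M ≥ y := (List.pairwise_cons.mp hsort).1 y hy
        exact Finset.mem_filter.mpr ⟨Finset.mem_Icc.mpr ⟨hpos y (by simp [hy]), hle⟩,
          hcond y (by simp [hy])⟩
  invFun x := by
    refine ⟨x.1.1 :: x.2.1, ⟨by simp, ?_, ?_⟩, ?_, ?_⟩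
    · refine List.pairwise_cons.mpr ⟨fun b hb => ?_, x.2.2.1⟩
      exact (Finset.mem_Icc.mp (Finset.mem_filter.mp (x.2.2.2.2 b hb)).1).2
    · intro y hy
      rcases List.mem_cons.mp hy with rfl | hy
      · exact (Finset.mem_Icc.mp (Finset.mem_filter.mp x.1.2).1).1
      · exact (Finset.mem_Icc.mp (Finset.mem_filter.mp (x.2.2.2.2 y hy)).1).1
    · have hMn : x.1.1 ≤ n := (Finset.mem_Icc.mp (Finset.mem_filter.mp x.1.2).1).2
      have htl := x.2.2.2.1
      simp only [perimeter, List.headI_cons, List.length_cons, htl]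
      omega
    · intro y hy
      rcases List.mem_cons.mp hy with rfl | hy
      · exact (Finset.mem_filter.mp x.1.2).2
      · exact (Finset.mem_filter.mp (x.2.2.2.2 y hy)).2
  left_inv x := by
    obtain ⟨l, hl⟩ := x
    rcases l with _ | ⟨M, t⟩
    · exact absurd rfl hl.1.1
    · rfl
  right_inv x := by
    obtain ⟨⟨M, hM⟩, ⟨t, ht⟩⟩ := x
    rfl

lemma count_eq (D A n : ℕ) :
    Nat.card {l : List ℕ // IsPartition l ∧ perimeter l = n ∧
        (∀ x ∈ l, x % D = A % D ∨ (x + A) % D = 0)}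
      = ∑ M ∈ Sfin D A n, ((Sfin D A M).card + (n - M) - 1).choose (n - M) := by
  rw [Nat.card_congr ((mainEquiv D A n).trans
    (Equiv.sigmaCongrRight fun M => sortedListEquivSym (Sfin D A M.1) (n - M.1)))]
  rw [Nat.card_eq_fintype_card, Fintype.card_sigma]
  rw [← Finset.sum_coe_sort (Sfin D A n) (fun M => ((Sfin D A M).card + (n - M) - 1).choose (n - M))]
  congr 1
  ext M
  rw [Sym.card_sym_eq_choose, Fintype.card_coe]

lemma Sfin_eq (D A M : ℕ) (hA : 0 < A) (h2 : 2*A < D) (hAM : A ≤ M) :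
    Sfin D A M = (Finset.range ((M - A)/D + 1)).image (fun k => A + k*D)
      ∪ (Finset.Icc 1 ((M + A)/D)).image (fun k => k*D - A) := by
  have hD : 0 < D := by omega
  ext x
  simp only [Sfin, Finset.mem_filter, Finset.mem_Icc, Finset.mem_union, Finset.mem_image,
    Finset.mem_range]
  constructor
  · rintro ⟨⟨h1, hxM⟩, hc | hc⟩
    · rw [Nat.mod_eq_of_lt (show A < D by omega)] at hc
      left
      refine ⟨x / D, ?_, ?_⟩
      · have hx : x = A + D * (x / D) := by
          conv_lhs => rw [← Nat.mod_add_div x D, hc]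
        have h3 : D * (x / D) ≤ M - A := by omega
        have h4 : (D * (x / D)) / D ≤ (M - A) / D := Nat.div_le_div_right h3
        rw [Nat.mul_div_cancel_left _ hD] at h4
        omega
      · conv_rhs => rw [← Nat.mod_add_div x D, hc]
        ring
    · right
      obtain ⟨k, hk⟩ := Nat.dvd_of_mod_eq_zero hc
      have hc2 : D * k = k * D := mul_comm D k
      have hk1 : 1 ≤ k := by
        rcases Nat.eq_zero_or_pos k with rfl | h
        · omega
        · omega
      refine ⟨k, ⟨hk1, ?_⟩, by omega⟩
      rw [Nat.le_div_iff_mul_le hD]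
      omega
  · rintro (⟨k, hk, rfl⟩ | ⟨k, ⟨hk1, hk2⟩, rfl⟩)
    · have hk' : k * D ≤ M - A := by
        have := Nat.div_mul_le_self (M - A) D
        have h5 : k * D ≤ ((M - A)/D) * D := Nat.mul_le_mul_right D (by omega)
        omega
      refine ⟨⟨by omega, by omega⟩, Or.inl ?_⟩
      rw [Nat.add_mul_mod_self_right]
    · have hDk : D ≤ k * D := Nat.le_mul_of_pos_left D hk1
      have hk' : k * D ≤ M + A := (Nat.le_div_iff_mul_le hD).mp hk2
      refine ⟨⟨by omega, by omega⟩, Or.inr ?_⟩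
      have : k * D - A + A = k * D := by omega
      rw [this, Nat.mul_mod_left]

lemma Sfin_disj (D A t1 t2 : ℕ) (hA : 0 < A) (h2 : 2*A < D) :
    Disjoint ((Finset.range t1).image (fun k => A + k*D))
      ((Finset.Icc 1 t2).image (fun k => k*D - A)) := by
  rw [Finset.disjoint_left]
  rintro x hx1 hx2
  obtain ⟨j, _, rfl⟩ := Finset.mem_image.mp hx1
  obtain ⟨k, hk, hkeq⟩ := Finset.mem_image.mp hx2
  have hk1 : 1 ≤ k := (Finset.mem_Icc.mp hk).1
  have hDk : D ≤ k * D := Nat.le_mul_of_pos_left D hk1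
  have heq : k * D = j * D + 2 * A := by omega
  have hjk : j < k := by
    by_contra hc
    have : k * D ≤ j * D := Nat.mul_le_mul_right D (by omega)
    omega
  have : (j + 1) * D ≤ k * D := Nat.mul_le_mul_right D (by omega)
  have hsm : (j + 1) * D = j * D + D := by ring
  omega

lemma card_Sfin (D A M : ℕ) (hA : 0 < A) (h2 : 2*A < D) (hAM : A ≤ M) :
    (Sfin D A M).card = ((M - A)/D + 1) + (M + A)/D := by
  have hD : 0 < D := by omega
  rw [Sfin_eq D A M hA h2 hAM,
    Finset.card_union_of_disjoint (Sfin_disj D A _ _ hA h2)]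
  rw [Finset.card_image_of_injective _ (fun j k hjk => by
    exact Nat.eq_of_mul_eq_mul_right hD (by omega))]
  rw [Finset.card_image_of_injOn (fun j hj k hk hjk => by
    have hj1 : 1 ≤ j := (Finset.mem_Icc.mp hj).1
    have hk1 : 1 ≤ k := (Finset.mem_Icc.mp hk).1
    have hDj : D ≤ j * D := Nat.le_mul_of_pos_left D hj1
    have hDk : D ≤ k * D := Nat.le_mul_of_pos_left D hk1
    exact Nat.eq_of_mul_eq_mul_right hD (by omega))]
  rw [Finset.card_range, Nat.card_Icc, Nat.add_sub_cancel]


theorem stmt19 (d a n : ℕ) (hd : 0 < d) (ha : 0 < a) (hn : 0 < n)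
    (h : 2 * a < d + 3) (hna : a ≤ n) :
    Nat.card {l : List ℕ // IsPartition l ∧ perimeter l = n ∧
        (∀ x ∈ l, x % (d + 3) = a % (d + 3) ∨ (x + a) % (d + 3) = 0)}
      = (∑ k ∈ Finset.range ((n - a) / (d + 3) + 1),
          Nat.choose (n - a - k * d - k) (n - a - k * d - 3 * k))
        + ∑ k ∈ Finset.Icc 1 ((n + a) / (d + 3)),
            Nat.choose (n + a - k * d - k - 1) (n + a - k * d - 3 * k) := by
  have hD : 0 < d + 3 := by omega
  rw [count_eq (d+3) a n]
  rw [Sfin_eq (d+3) a n ha h hna]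
  rw [Finset.sum_union (Sfin_disj (d+3) a _ _ ha h)]
  congr 1
  · rw [Finset.sum_image (fun j hj k hk hjk =>
      Nat.eq_of_mul_eq_mul_right hD (by omega))]
    apply Finset.sum_congr rfl
    intro k hk
    have hkD : k * (d+3) ≤ n - a :=
      (Nat.le_div_iff_mul_le hD).mp (Nat.lt_succ_iff.mp (Finset.mem_range.mp hk))
    rw [card_Sfin (d+3) a _ ha h (by omega)]
    have e1 : a + k*(d+3) - a = k*(d+3) := by omega
    have e2 : a + k*(d+3) + a = 2*a + k*(d+3) := by ring
    rw [e1, e2, Nat.mul_div_cancel _ hD, Nat.add_mul_div_right _ _ hD, Nat.div_eq_of_lt h]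
    have hmul : k*(d+3) = k*d + 3*k := by ring
    congr 1 <;> omega
  · rw [Finset.sum_image (fun j hj k hk hjk => by
      have hj1 : 1 ≤ j := (Finset.mem_Icc.mp hj).1
      have hk1 : 1 ≤ k := (Finset.mem_Icc.mp hk).1
      have hDj : d + 3 ≤ j * (d+3) := Nat.le_mul_of_pos_left _ hj1
      have hDk : d + 3 ≤ k * (d+3) := Nat.le_mul_of_pos_left _ hk1
      exact Nat.eq_of_mul_eq_mul_right hD (by omega))]
    apply Finset.sum_congr rfl
    intro k hk
    obtain ⟨hk1, hk2⟩ := Finset.mem_Icc.mp hk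
    have hkD : k * (d+3) ≤ n + a := (Nat.le_div_iff_mul_le hD).mp hk2
    obtain ⟨m, rfl⟩ : ∃ m, k = m + 1 := ⟨k - 1, by omega⟩
    have hsm : (m+1)*(d+3) = m*(d+3) + (d+3) := by ring
    rw [card_Sfin (d+3) a _ ha h (by omega)]
    have e1 : (m+1)*(d+3) - a - a = (d + 3 - 2*a) + m*(d+3) := by omega
    have e2 : (m+1)*(d+3) - a + a = (m+1)*(d+3) := by omega
    rw [e1, e2, Nat.mul_div_cancel _ hD, Nat.add_mul_div_right _ _ hD,
      Nat.div_eq_of_lt (by omega)]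
    have hmul : (m+1)*(d+3) = (m+1)*d + 3*m + 3 := by ring
    congr 1 <;> omega
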